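/- Let γ be a smooth arclength-parameterized plane curve with γ(0) = (1, 0), γ'(0) = (0, 1), and curvature κ(0) > 0. For s near 0 with γ₁'(s) ≠ 0, define F(s) = (γ(s) · γ'(s))/γ₁'(s). Then lim_{s → 0} F(s) = 1 − 1/κ(0). -/

import Mathlib

open Real Filter

/-- Lemma `kappa(0) equals lambda(0)`: for a smooth arclength-parameterized
plane curve `γ` with `γ(0) = (1, 0)`, `γ'(0) = (0, 1)`, `γ''(0) = (-κ₀, 0)`
with curvature `κ₀ > 0`, the abscissa `F(s) = (γ(s) · γ'(s))/γ₁'(s)` of the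
center of the canonical circle tends to `1 - 1/κ₀` as `s → 0`. -/
theorem stmt_14 (γ : ℝ → ℝ × ℝ) (κ₀ : ℝ) (hκ₀ : 0 < κ₀)
    (hsmooth : ContDiff ℝ 2 γ)
    (harc : ∀ s, (deriv γ s).1^2 + (deriv γ s).2^2 = 1)
    (h0 : γ 0 = (1, 0))
    (h1 : deriv γ 0 = (0, 1))
    (h2 : deriv (deriv γ) 0 = (-κ₀, 0)) :
    Tendsto (fun s => ((γ s).1 * (deriv γ s).1 + (γ s).2 * (deriv γ s).2) /
        (deriv γ s).1)
      (nhdsWithin 0 {(0:ℝ)}ᶜ) (nhds (1 - 1/κ₀)) := by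
  have hκ₀' : κ₀ ≠ 0 := ne_of_gt hκ₀
  -- differentiability facts
  have hd1 : Differentiable ℝ γ := hsmooth.differentiable (by norm_num)
  have hd2 : Differentiable ℝ (deriv γ) := by
    have := (contDiff_succ_iff_deriv.mp (show ContDiff ℝ (1+1) γ from hsmooth)).2.2
    exact this.differentiable (by norm_num)
  have hγ : HasDerivAt γ (deriv γ 0) 0 := (hd1 0).hasDerivAt
  have hγ' : HasDerivAt (deriv γ) (-κ₀, 0) 0 := h2 ▸ (hd2 0).hasDerivAt
  have hγ1 : HasDerivAt (fun s => (γ s).1) ((deriv γ 0).1) 0 :=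
    (ContinuousLinearMap.fst ℝ ℝ ℝ).hasFDerivAt.comp_hasDerivAt 0 hγ
  have hγ2 : HasDerivAt (fun s => (γ s).2) ((deriv γ 0).2) 0 :=
    (ContinuousLinearMap.snd ℝ ℝ ℝ).hasFDerivAt.comp_hasDerivAt 0 hγ
  have hγ'1 : HasDerivAt (fun s => (deriv γ s).1) (-κ₀) 0 :=
    (ContinuousLinearMap.fst ℝ ℝ ℝ).hasFDerivAt.comp_hasDerivAt 0 hγ'
  have hγ'2 : HasDerivAt (fun s => (deriv γ s).2) 0 0 :=
    (ContinuousLinearMap.snd ℝ ℝ ℝ).hasFDerivAt.comp_hasDerivAt 0 hγ'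
  rw [h1] at hγ1 hγ2
  set f := fun s => (γ s).1 * (deriv γ s).1 + (γ s).2 * (deriv γ s).2 with hf
  set g := fun s => (deriv γ s).1 with hg
  have hF : HasDerivAt f (1 - κ₀) 0 := by
    have := ((hγ1.mul hγ'1).add (hγ2.mul hγ'2))
    simp only [h0, h1] at this
    have hg0' : g 0 = 0 := by simp [hg, h1]
    have e : (0:ℝ) * g 0 + 1 * -κ₀ + (1 * 1 + 0 * 0) = 1 - κ₀ := by rw [hg0']; ring
    rw [e] at this
    exact this
  have hG : HasDerivAt g (-κ₀) 0 := hγ'1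
  have hf0 : f 0 = 0 := by simp [hf, h0, h1]
  have hg0 : g 0 = 0 := by simp [hg, h1]
  have hFs : Tendsto (slope f 0) (nhdsWithin 0 {(0:ℝ)}ᶜ) (nhds (1 - κ₀)) :=
    hasDerivAt_iff_tendsto_slope.mp hF
  have hGs : Tendsto (slope g 0) (nhdsWithin 0 {(0:ℝ)}ᶜ) (nhds (-κ₀)) :=
    hasDerivAt_iff_tendsto_slope.mp hG
  have hdiv : Tendsto (fun s => slope f 0 s / slope g 0 s)
      (nhdsWithin 0 {(0:ℝ)}ᶜ) (nhds ((1 - κ₀) / (-κ₀))) :=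
    hFs.div hGs (by simpa using hκ₀')
  have heq : (fun s => slope f 0 s / slope g 0 s) =ᶠ[nhdsWithin 0 {(0:ℝ)}ᶜ]
      (fun s => f s / g s) := by
    filter_upwards [self_mem_nhdsWithin] with s hs
    have hs0 : s ≠ 0 := hs
    simp only [slope_def_field, hf0, hg0, sub_zero]
    field_simp
  have : Tendsto (fun s => f s / g s) (nhdsWithin 0 {(0:ℝ)}ᶜ)
      (nhds ((1 - κ₀) / (-κ₀))) := hdiv.congr' heq
  have hval : (1 - κ₀) / (-κ₀) = 1 - 1/κ₀ := by
    rw [div_neg, sub_div, div_self hκ₀', neg_sub, one_div]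
  rwa [hval] at this
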